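/- Let s_0, s_1, s_2 be the 3-hyperbolic functions. Then for all z ∈ ℂ: s_0(−z) = s_0(z)² − s_1(z)s_2(z), s_1(−z) = s_2(z)² − s_0(z)s_1(z), and s_2(−z) = s_1(z)² − s_0(z)s_2(z). -/
import Mathlib

open Complex Finset

noncomputable def zeta3 : ℂ := Complex.exp (2 * Real.pi * Complex.I / 3)

noncomputable def s3 (k : ℕ) (z : ℂ) : ℂ :=
  (1 / 3) * ∑ m ∈ Finset.range 3, ((zeta3 ^ m)⁻¹) ^ k * Complex.exp (z * zeta3 ^ m)

lemma zeta3_cube : zeta3 ^ 3 = 1 :=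
  (Complex.isPrimitiveRoot_exp 3 (by norm_num)).pow_eq_one

lemma zeta3_sum : 1 + zeta3 + zeta3 ^ 2 = 0 := by
  have hne : zeta3 ≠ 1 := (Complex.isPrimitiveRoot_exp 3 (by norm_num)).ne_one (by norm_num)
  have h : (zeta3 - 1) * (1 + zeta3 + zeta3 ^ 2) = 0 := by linear_combination zeta3_cube
  rcases mul_eq_zero.mp h with h | h
  · exact absurd (sub_eq_zero.mp h) hne
  · exact h

lemma zeta3_inv : zeta3⁻¹ = zeta3 ^ 2 := by
  refine inv_eq_of_mul_eq_one_left ?_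
  linear_combination zeta3_cube

lemma zeta3_sq_inv : (zeta3 ^ 2)⁻¹ = zeta3 := by
  refine inv_eq_of_mul_eq_one_left ?_
  linear_combination zeta3_cube

theorem s3_opposite_argument (z : ℂ) :
    s3 0 (-z) = s3 0 z ^ 2 - s3 1 z * s3 2 z ∧
    s3 1 (-z) = s3 2 z ^ 2 - s3 0 z * s3 1 z ∧
    s3 2 (-z) = s3 1 z ^ 2 - s3 0 z * s3 2 z := by
  have hsum := zeta3_sum
  have h3 := zeta3_cube
  have e0 : Complex.exp (-z) = Complex.exp (z * zeta3) * Complex.exp (z * zeta3 ^ 2) := by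
    rw [← Complex.exp_add]; congr 1; linear_combination (-z) * hsum
  have e1 : Complex.exp (-z * zeta3) = Complex.exp z * Complex.exp (z * zeta3 ^ 2) := by
    rw [← Complex.exp_add]; congr 1; linear_combination (-z) * hsum
  have e2 : Complex.exp (-z * zeta3 ^ 2) = Complex.exp z * Complex.exp (z * zeta3) := by
    rw [← Complex.exp_add]; congr 1; linear_combination (-z) * hsum
  simp only [s3, Finset.sum_range_succ, Finset.sum_range_zero, pow_zero, pow_one,
    zero_add, inv_one, one_pow, one_mul, mul_one, zeta3_inv, zeta3_sq_inv]
  set a := Complex.exp z with ha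
  set bb := Complex.exp (z * zeta3) with hb
  set cc := Complex.exp (z * zeta3 ^ 2) with hc
  rw [e0, e1, e2]
  refine ⟨by linear_combination ((-1/9)*cc ^ 2 + (1/9)*cc ^ 2*zeta3 + (1/9)*bb*cc + (-1/9)*bb*cc*zeta3 + (1/9)*bb*cc*zeta3 ^ 3 + (-1/9)*bb ^ 2 + (1/9)*bb ^ 2*zeta3 + (-1/9)*bb ^ 2*zeta3 ^ 3 + (1/9)*bb ^ 2*zeta3 ^ 4 + (1/9)*a*cc + (1/9)*a*bb + (-1/9)*a*bb*zeta3 + (1/9)*a*bb*zeta3 ^ 2) * hsum,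
    by linear_combination ((1/9)*cc ^ 2*zeta3 + (-1/9)*cc ^ 2*zeta3 ^ 2 + (1/3)*bb*cc + (-2/9)*bb*cc*zeta3 + (2/9)*bb*cc*zeta3 ^ 3 + (-2/9)*bb*cc*zeta3 ^ 4 + (1/9)*bb ^ 2*zeta3 ^ 2 + (-1/9)*bb ^ 2*zeta3 ^ 3 + (1/9)*bb ^ 2*zeta3 ^ 5 + (-1/9)*bb ^ 2*zeta3 ^ 6 + (1/9)*a*cc + (1/9)*a*bb + (2/9)*a*bb*zeta3 + (-2/9)*a*bb*zeta3 ^ 2) * hsum,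
    by linear_combination ((1/3)*bb*cc + (-1/3)*bb*cc*zeta3 + (1/9)*bb*cc*zeta3 ^ 2 + (1/9)*a*cc + (-1/3)*a*cc*zeta3 + (1/3)*a*cc*zeta3 ^ 2 + (1/9)*a*bb + (-1/9)*a*bb*zeta3 + (1/9)*a*bb*zeta3 ^ 2) * hsum⟩
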